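/- Let f₁,…,f₁₀ be the ten quintics of the classifying map, in the stated order. For all y₁, y₂, y₃, y₄ ∈ ℂ, regard each fᵢ(ty₁, ty₂, ty₃, ty₄, 1) as a polynomial in t. Then its coefficients of t⁰, t¹, t² are 0 and its coefficient of t³ equals −gᵢ, where (g₁,…,g₁₀) = (y₁(y₂²−y₃²), y₁(y₃²−y₄²), y₂(y₁²−y₃²), y₂(y₁²−y₄²), y₃(y₁²−y₂²), y₃(y₁²−y₄²), y₄(y₁²−y₂²), y₄(y₁²−y₃²), 0, 0). Hence the map induced by Φ on the exceptional divisor over the point (0:0:0:0:1) sends (y₁:y₂:y₃:y₄) to (y₁(y₂²−y₃²) : y₁(y₃²−y₄²) : … : y₄(y₁²−y₂²) : y₄(y₁²−y₃²) : 0 : 0) ∈ ℙ⁹. -/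

import Mathlib

/-- The ten quintics `f₁,…,f₁₀` giving the classifying map `Φ : ℙ⁴ ⇢ ℙ⁹`
(indices 0-based: `v 0 = x₁, …, v 4 = x₅`). -/
def quintics {R : Type*} [CommRing R] (v : Fin 5 → R) : Fin 10 → R :=
  ![v 0 * (v 1 ^ 2 - v 2 ^ 2) * (v 3 ^ 2 - v 4 ^ 2),
    v 0 * (v 1 ^ 2 - v 4 ^ 2) * (v 2 ^ 2 - v 3 ^ 2),
    v 1 * (v 0 ^ 2 - v 2 ^ 2) * (v 3 ^ 2 - v 4 ^ 2),
    v 1 * (v 0 ^ 2 - v 3 ^ 2) * (v 2 ^ 2 - v 4 ^ 2),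
    v 2 * (v 0 ^ 2 - v 1 ^ 2) * (v 3 ^ 2 - v 4 ^ 2),
    v 2 * (v 0 ^ 2 - v 3 ^ 2) * (v 1 ^ 2 - v 4 ^ 2),
    v 3 * (v 0 ^ 2 - v 1 ^ 2) * (v 2 ^ 2 - v 4 ^ 2),
    v 3 * (v 0 ^ 2 - v 2 ^ 2) * (v 1 ^ 2 - v 4 ^ 2),
    v 4 * (v 0 ^ 2 - v 1 ^ 2) * (v 2 ^ 2 - v 3 ^ 2),
    v 4 * (v 0 ^ 2 - v 3 ^ 2) * (v 1 ^ 2 - v 2 ^ 2)]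

open Polynomial

/-- On the exceptional divisor over the point `q₅ = (0:0:0:0:1)`: each
`fᵢ(ty₁, ty₂, ty₃, ty₄, 1)`, as a polynomial in `t`, has coefficients of
`t⁰, t¹, t²` equal to `0` and coefficient of `t³` equal to `−gᵢ`, where
`g = (y₁(y₂²−y₃²), y₁(y₃²−y₄²), y₂(y₁²−y₃²), y₂(y₁²−y₄²), y₃(y₁²−y₂²),
y₃(y₁²−y₄²), y₄(y₁²−y₂²), y₄(y₁²−y₃²), 0, 0)`; hence `Φ` induces on this
divisor the map `(y₁:y₂:y₃:y₄) ↦ (y₁(y₂²−y₃²) : … : y₄(y₁²−y₃²) : 0 : 0)`. -/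
theorem map_on_exceptional_divisor_q5 (y₁ y₂ y₃ y₄ : ℂ) (i : Fin 10) :
    (quintics ![C y₁ * X, C y₂ * X, C y₃ * X, C y₄ * X, 1] i).coeff 0 = 0 ∧
    (quintics ![C y₁ * X, C y₂ * X, C y₃ * X, C y₄ * X, 1] i).coeff 1 = 0 ∧
    (quintics ![C y₁ * X, C y₂ * X, C y₃ * X, C y₄ * X, 1] i).coeff 2 = 0 ∧
    (quintics ![C y₁ * X, C y₂ * X, C y₃ * X, C y₄ * X, 1] i).coeff 3 =
      -(![y₁ * (y₂ ^ 2 - y₃ ^ 2), y₁ * (y₃ ^ 2 - y₄ ^ 2),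
          y₂ * (y₁ ^ 2 - y₃ ^ 2), y₂ * (y₁ ^ 2 - y₄ ^ 2),
          y₃ * (y₁ ^ 2 - y₂ ^ 2), y₃ * (y₁ ^ 2 - y₄ ^ 2),
          y₄ * (y₁ ^ 2 - y₂ ^ 2), y₄ * (y₁ ^ 2 - y₃ ^ 2), 0, 0] i) := by
  fin_cases i <;>
    refine ⟨?_, ?_, ?_, ?_⟩ <;>
    · simp only [quintics, Matrix.cons_val]
      norm_num [Matrix.cons_val_zero, Matrix.cons_val_one, Matrix.head_cons,
        Matrix.cons_val_succ]
      try ring_nf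
      try simp only [← C_pow, coeff_one, coeff_X_pow, coeff_C_mul, coeff_mul_C, coeff_sub,
        coeff_add, coeff_neg]
      try norm_num
      try ring
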